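/- Maximality of W_p: let (X, d, x₀) be a pointed extended pseudometric space and ρ a p-subadditive extended pseudometric on D(X, x₀) such that the canonical map i : (X, d) → (D(X, x₀), ρ) is 1-Lipschitz. Then ρ ≤ W_p[d, x₀] pointwise. -/

import Mathlib

open scoped ENNReal BigOperators
noncomputable section

/-- An extended pseudometric. -/
structure IsEPMetric {X : Type*} (d : X → X → ℝ≥0∞) : Prop where
  refl : ∀ x, d x x = 0
  symm : ∀ x y, d x y = d y x
  triangle : ∀ x y z, d x z ≤ d x y + d y z

/-- The ℓ^p norm of a finite tuple of extended nonnegative reals. -/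
def lpNorm (p : ℝ≥0∞) {n : ℕ} (v : Fin n → ℝ≥0∞) : ℝ≥0∞ :=
  if p = ∞ then ⨆ i, v i else (∑ i, v i ^ p.toReal) ^ (1 / p.toReal)

variable {X : Type*}

/-- The congruence on the free commutative monoid (multisets) identifying
formal sums that differ by copies of the basepoint. -/
def diagCon (x₀ : X) : AddCon (Multiset X) where
  r s t := ∃ a b : ℕ, s + Multiset.replicate a x₀ = t + Multiset.replicate b x₀
  iseqv := by
    constructor
    · exact fun s => ⟨0, 0, rfl⟩
    · rintro s t ⟨a, b, h⟩; exact ⟨b, a, h.symm⟩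
    · rintro s t u ⟨a, b, h₁⟩ ⟨a', b', h₂⟩
      refine ⟨a + a', b' + b, ?_⟩
      have h3 : s + Multiset.replicate a x₀ + Multiset.replicate a' x₀
          = u + Multiset.replicate b' x₀ + Multiset.replicate b x₀ := by
        rw [h₁, add_right_comm, h₂, add_right_comm]
      simpa [Multiset.replicate_add, add_assoc] using h3
  add' := by
    rintro s t s' t' ⟨a, b, h₁⟩ ⟨a', b', h₂⟩
    refine ⟨a + a', b + b', ?_⟩
    have h3 : (s + Multiset.replicate a x₀) + (s' + Multiset.replicate a' x₀)
        = (t + Multiset.replicate b x₀) + (t' + Multiset.replicate b' x₀) := by rw [h₁, h₂]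
    calc s + s' + Multiset.replicate (a + a') x₀
        = (s + Multiset.replicate a x₀) + (s' + Multiset.replicate a' x₀) := by
          rw [Multiset.replicate_add]; exact add_add_add_comm s s' _ _
      _ = (t + Multiset.replicate b x₀) + (t' + Multiset.replicate b' x₀) := h3
      _ = t + t' + Multiset.replicate (b + b') x₀ := by
          rw [Multiset.replicate_add]; exact (add_add_add_comm t t' _ _).symm

/-- The monoid of persistence diagrams on a pointed set. -/
abbrev Diagram (X : Type*) (x₀ : X) := (diagCon x₀).Quotient

/-- The canonical map `X → D(X,x₀)`. -/
def diagι (x₀ : X) (x : X) : Diagram X x₀ := (diagCon x₀).mk' {x}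

/-- Pad a tuple to length `r` with copies of the basepoint. -/
def padTo (x₀ : X) {n : ℕ} (x : Fin n → X) (r : ℕ) : Fin r → X :=
  fun k => if h : (k : ℕ) < n then x ⟨k, h⟩ else x₀

/-- The minimal ℓ^p matching cost between two tuples of equal length. -/
def matchCost (d : X → X → ℝ≥0∞) (p : ℝ≥0∞) {r : ℕ} (x y : Fin r → X) : ℝ≥0∞ :=
  ⨅ σ : Equiv.Perm (Fin r), lpNorm p (fun k => d (x k) (y (σ k)))

/-- A tuple enumerating a multiset. -/
def mFun (s : Multiset X) : Fin s.toList.length → X := fun k => s.toList.get k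

/-- The p-Wasserstein cost between two multisets, padding both to the combined length. -/
def WpM (d : X → X → ℝ≥0∞) (x₀ : X) (p : ℝ≥0∞) (s t : Multiset X) : ℝ≥0∞ :=
  matchCost d p (padTo x₀ (mFun s) (Multiset.card s + Multiset.card t))
                (padTo x₀ (mFun t) (Multiset.card s + Multiset.card t))

/-- The p-Wasserstein distance on the monoid of persistence diagrams. -/
def Wp (d : X → X → ℝ≥0∞) (x₀ : X) (p : ℝ≥0∞) (α β : Diagram X x₀) : ℝ≥0∞ :=
  ⨅ (s : Multiset X) (t : Multiset X) (_ : (diagCon x₀).mk' s = α)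
    (_ : (diagCon x₀).mk' t = β), WpM d x₀ p s t

/-- The Lipschitz norm of a map between extended pseudometric spaces. -/
def eLipNorm {Y : Type*} (d : X → X → ℝ≥0∞) (ρ : Y → Y → ℝ≥0∞) (f : X → Y) : ℝ≥0∞ :=
  sInf {C : ℝ≥0∞ | ∀ x y, ρ (f x) (f y) ≤ C * d x y}


section Aux

variable {x₀ : X}

lemma lpNorm_mono {p : ℝ≥0∞} {n : ℕ} {u v : Fin n → ℝ≥0∞} (h : ∀ i, u i ≤ v i) :
    lpNorm p u ≤ lpNorm p v := by
  unfold lpNorm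
  split
  · exact iSup_mono h
  · refine ENNReal.rpow_le_rpow ?_ (by positivity)
    exact Finset.sum_le_sum fun i _ => ENNReal.rpow_le_rpow (h i) ENNReal.toReal_nonneg

lemma lpNorm_pair {p : ℝ≥0∞} (hp : p ≠ ∞) (u v : ℝ≥0∞) :
    lpNorm p ![u, v] = (u ^ p.toReal + v ^ p.toReal) ^ (1 / p.toReal) := by
  simp [lpNorm, hp, Fin.sum_univ_two]

/-- Sum of singleton multisets of a tuple. -/
lemma sum_singleton_multiset : ∀ {n : ℕ} (f : Fin n → X),
    (∑ i, ({f i} : Multiset X)) = (List.ofFn f : Multiset X) := by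
  intro n
  induction n with
  | zero => intro f; simp
  | succ n ih =>
    intro f
    rw [Fin.sum_univ_succ, List.ofFn_succ, ih (fun i => f i.succ)]
    rfl

lemma ofFn_padTo (x₀ : X) {n : ℕ} (x : Fin n → X) {r : ℕ} (h : n ≤ r) :
    List.ofFn (padTo x₀ x r) = List.ofFn x ++ List.replicate (r - n) x₀ := by
  apply List.ext_getElem
  · simp [Nat.add_sub_cancel' h]
  · intro i h1 h2
    simp only [List.getElem_ofFn, List.getElem_append, List.length_ofFn,
      List.getElem_replicate, padTo]

lemma mk'_replicate (s : Multiset X) (m : ℕ) :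
    (diagCon x₀).mk' (s + Multiset.replicate m x₀) = (diagCon x₀).mk' s :=
  (AddCon.eq _).2 ⟨0, m, by simp⟩

lemma sum_diagι_padTo (s : Multiset X) {r : ℕ} (h : Multiset.card s ≤ r) :
    (∑ i, diagι x₀ (padTo x₀ (mFun s) r i)) = (diagCon x₀).mk' s := by
  have hlen : s.toList.length ≤ r := by rwa [Multiset.length_toList]
  have := map_sum ((diagCon x₀).mk' : Multiset X →+ Diagram X x₀)
    (fun i => ({padTo x₀ (mFun s) r i} : Multiset X)) Finset.univ
  have hms : (∑ i, ({padTo x₀ (mFun s) r i} : Multiset X))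
      = s + Multiset.replicate (r - s.toList.length) x₀ := by
    rw [sum_singleton_multiset, ofFn_padTo x₀ (mFun s) hlen]
    have h1 : (List.ofFn (mFun s)) = s.toList := by
      have := List.ofFn_get s.toList
      simpa [mFun] using this
    rw [h1, ← Multiset.coe_add, Multiset.coe_replicate, Multiset.coe_toList]
  calc (∑ i, diagι x₀ (padTo x₀ (mFun s) r i))
      = (diagCon x₀).mk' (∑ i, ({padTo x₀ (mFun s) r i} : Multiset X)) := this.symm
    _ = (diagCon x₀).mk' s := by rw [hms, mk'_replicate]

end Aux

lemma rho_sum_le_lpNorm {x₀ : X} {p : ℝ≥0∞} (hp : 1 ≤ p)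
    (ρ : Diagram X x₀ → Diagram X x₀ → ℝ≥0∞) (hρ : IsEPMetric ρ)
    (hsub : ∀ a a' b b' : Diagram X x₀, ρ (a + b) (a' + b') ≤ lpNorm p ![ρ a a', ρ b b']) :
    ∀ (n : ℕ) (a b : Fin n → Diagram X x₀),
      ρ (∑ i, a i) (∑ i, b i) ≤ lpNorm p (fun i => ρ (a i) (b i)) := by
  by_cases hpi : p = ∞
  · subst hpi
    intro n
    induction n with
    | zero => intro a b; simp [hρ.refl]
    | succ n ih =>
      intro a b
      rw [Fin.sum_univ_castSucc (f := a), Fin.sum_univ_castSucc (f := b)]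
      refine le_trans (hsub _ _ _ _) ?_
      simp only [lpNorm, if_pos rfl]
      apply iSup_le
      intro i
      fin_cases i
      · simp only [Matrix.cons_val_zero]
        refine le_trans ?_ (iSup_le fun j : Fin n =>
          le_iSup (fun i => ρ (a i) (b i)) j.castSucc)
        simpa [lpNorm] using ih (fun i => a i.castSucc) (fun i => b i.castSucc)
      · simpa using le_iSup (fun i => ρ (a i) (b i)) (Fin.last n)
  · have hp0 : p ≠ 0 := (zero_lt_one.trans_le hp).ne'
    have hpt : 0 < p.toReal := ENNReal.toReal_pos hp0 hpi
    have key : ∀ (n : ℕ) (a b : Fin n → Diagram X x₀),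
        ρ (∑ i, a i) (∑ i, b i) ^ p.toReal ≤ ∑ i, ρ (a i) (b i) ^ p.toReal := by
      intro n
      induction n with
      | zero => intro a b; simp [hρ.refl, ENNReal.zero_rpow_of_pos hpt]
      | succ n ih =>
        intro a b
        rw [Fin.sum_univ_castSucc (f := a), Fin.sum_univ_castSucc (f := b),
          Fin.sum_univ_castSucc (f := fun i => ρ (a i) (b i) ^ p.toReal)]
        have h1 := hsub (∑ i : Fin n, a i.castSucc) (∑ i : Fin n, b i.castSucc) (a (Fin.last n)) (b (Fin.last n))
        rw [lpNorm_pair hpi] at h1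
        calc ρ (∑ i : Fin n, a i.castSucc + a (Fin.last n)) (∑ i : Fin n, b i.castSucc + b (Fin.last n))
              ^ p.toReal
            ≤ ((ρ (∑ i : Fin n, a i.castSucc) (∑ i : Fin n, b i.castSucc) ^ p.toReal
                + ρ (a (Fin.last n)) (b (Fin.last n)) ^ p.toReal) ^ (1 / p.toReal))
              ^ p.toReal := ENNReal.rpow_le_rpow h1 hpt.le
          _ = ρ (∑ i : Fin n, a i.castSucc) (∑ i : Fin n, b i.castSucc) ^ p.toReal
                + ρ (a (Fin.last n)) (b (Fin.last n)) ^ p.toReal := by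
              rw [← ENNReal.rpow_mul, one_div_mul_cancel hpt.ne', ENNReal.rpow_one]
          _ ≤ _ := add_le_add (ih _ _) le_rfl
    intro n a b
    have h2 := ENNReal.rpow_le_rpow (key n a b) (by positivity : (0:ℝ) ≤ 1 / p.toReal)
    rw [← ENNReal.rpow_mul, mul_one_div_cancel hpt.ne', ENNReal.rpow_one] at h2
    simpa [lpNorm, hpi] using h2

/-- Maximality of `W_p`: any p-subadditive extended pseudometric on `D(X,x₀)` for which
the canonical map is 1-Lipschitz is bounded above by `W_p`. -/
theorem wasserstein_maximal (d : X → X → ℝ≥0∞) (hd : IsEPMetric d) (x₀ : X)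
    (p : ℝ≥0∞) (hp : 1 ≤ p)
    (ρ : Diagram X x₀ → Diagram X x₀ → ℝ≥0∞) (hρ : IsEPMetric ρ)
    (hsub : ∀ a a' b b' : Diagram X x₀, ρ (a + b) (a' + b') ≤ lpNorm p ![ρ a a', ρ b b'])
    (hlip : ∀ x y : X, ρ (diagι x₀ x) (diagι x₀ y) ≤ d x y) :
    ∀ α β : Diagram X x₀, ρ α β ≤ Wp d x₀ p α β := by
  intro α β
  rw [Wp]
  refine le_iInf fun s => le_iInf fun t => le_iInf fun hs => le_iInf fun ht => ?_
  rw [WpM, matchCost]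
  set r := Multiset.card s + Multiset.card t with hr
  refine le_iInf fun σ => ?_
  have hα : (∑ i, diagι x₀ (padTo x₀ (mFun s) r i)) = α := by
    rw [sum_diagι_padTo s (Nat.le_add_right _ _), hs]
  have hβσ : (∑ i, diagι x₀ (padTo x₀ (mFun t) r (σ i))) = β := by
    rw [Equiv.sum_comp σ (fun i => diagι x₀ (padTo x₀ (mFun t) r i)),
      sum_diagι_padTo t (Nat.le_add_left _ _), ht]
  calc ρ α β
      = ρ (∑ i, diagι x₀ (padTo x₀ (mFun s) r i))
          (∑ i, diagι x₀ (padTo x₀ (mFun t) r (σ i))) := by rw [hα, hβσ]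
    _ ≤ lpNorm p (fun i => ρ (diagι x₀ (padTo x₀ (mFun s) r i))
          (diagι x₀ (padTo x₀ (mFun t) r (σ i)))) := rho_sum_le_lpNorm hp ρ hρ hsub _ _ _
    _ ≤ lpNorm p (fun i => d (padTo x₀ (mFun s) r i) (padTo x₀ (mFun t) r (σ i))) :=
        lpNorm_mono fun i => hlip _ _

end
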